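/- Let A be an n×n matrix over a field with rank r, arranged so that its upper-left r×r submatrix A(r) is invertible. Define the (2n−r)×(2n−r) block matrix E = [[A(r), B, 0], [C, D, I_{n−r}], [0, I_{n−r}, 0]], where A = [[A(r), B],[C, D]]. Then det E = ± det A(r), and in particular E is invertible. -/

import Mathlib

/-- the extended matrix `E = [[A(r), B, 0], [C, D, I], [0, I, 0]]` has
determinant `± det A(r)` and is invertible when `A(r)` is. -/
theorem stmt_6 {k : Type*} [Field k] {r s : ℕ}
    (Ar : Matrix (Fin r) (Fin r) k) (B : Matrix (Fin r) (Fin s) k)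
    (C : Matrix (Fin s) (Fin r) k) (D : Matrix (Fin s) (Fin s) k)
    (hAr : IsUnit Ar.det)
    (E : Matrix (Fin r ⊕ (Fin s ⊕ Fin s)) (Fin r ⊕ (Fin s ⊕ Fin s)) k)
    (hE : E = Matrix.fromBlocks Ar
        (Matrix.fromCols B (0 : Matrix (Fin r) (Fin s) k))
        (Matrix.fromRows C (0 : Matrix (Fin s) (Fin r) k))
        (Matrix.fromBlocks D 1 1 0)) :
    (E.det = Ar.det ∨ E.det = -Ar.det) ∧ IsUnit E.det := by
  have : Invertible Ar := Ar.invertibleOfIsUnitDet hAr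
  set J : Matrix (Fin s ⊕ Fin s) (Fin s ⊕ Fin s) k := Matrix.fromBlocks 0 1 1 0 with hJ
  have hJ2 : J * J = 1 := by
    simp [hJ, Matrix.fromBlocks_multiply, Matrix.fromBlocks_one]
  have hJdet : J.det = 1 ∨ J.det = -1 := by
    have : J.det * J.det = 1 := by rw [← Matrix.det_mul, hJ2, Matrix.det_one]
    exact mul_self_eq_one_iff.mp this
  -- det of fromBlocks X 1 1 0 equals det J
  have key : ∀ X : Matrix (Fin s) (Fin s) k,
      (Matrix.fromBlocks X 1 1 (0 : Matrix (Fin s) (Fin s) k)).det = J.det := by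
    intro X
    have hfac : Matrix.fromBlocks X 1 1 (0 : Matrix (Fin s) (Fin s) k) =
        Matrix.fromBlocks 1 X 0 1 * J := by
      simp [hJ, Matrix.fromBlocks_multiply]
    rw [hfac, Matrix.det_mul, Matrix.det_fromBlocks_zero₂₁]
    simp
  have hEdet : E.det = Ar.det * J.det := by
    rw [hE, Matrix.det_fromBlocks₁₁]
    congr 1
    rw [← key (D - C * ⅟Ar * B)]
    congr 1
    rw [Matrix.fromRows_mul, Matrix.fromRows_mul_fromCols]
    ext (i | i) (j | j) <;>
      simp [Matrix.fromBlocks, Matrix.sub_apply]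
  constructor
  · rcases hJdet with h | h <;> rw [hEdet, h] <;> simp
  · rw [hEdet]
    exact hAr.mul (by rcases hJdet with h | h <;> simp [h])
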